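/- Let R be a ring satisfying (SR_r), let n ≥ r, let x, y ∈ R^n be unimodular vectors, and let C, D ⊆ R^n be right R-submodules with R^n = C ⊕ x·R and R^n = D ⊕ y·R. Then there exists M ∈ EL_n(R) with M·x = y and M·C = D. -/

import Mathlib

open Matrix

/-- A vector `v ∈ Rⁿ` is *unimodular* if some homomorphism of right `R`-modules
`φ : Rⁿ → R` sends it to `1`.  Right `R`-modules are encoded as modules over `Rᵐᵒᵖ`. -/
def IsUnimodular {n : ℕ} (R : Type) [Ring R] (v : Fin n → R) : Prop :=
  ∃ φ : (Fin n → R) →ₗ[Rᵐᵒᵖ] R, φ v = 1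

/-- Bass's stable rank condition `(SR_r)`: for all `n ≥ r` and every unimodular
`(c₁, …, cₙ) ∈ Rⁿ` there are `b₁, …, b_{n-1} ∈ R` such that
`(c₁ + b₁ cₙ, …, c_{n-1} + b_{n-1} cₙ)` is unimodular. -/
def SatisfiesSR (R : Type) [Ring R] (r : ℕ) : Prop :=
  ∀ n : ℕ, r ≤ n + 1 → ∀ c : Fin (n + 1) → R, IsUnimodular R c →
    ∃ b : Fin n → R,
      IsUnimodular R (fun i : Fin n => c i.castSucc + b i * c (Fin.last n))

/-- An elementary matrix differs from the identity at exactly one off-diagonal entry. -/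
def IsElementaryMatrix {R : Type} [Ring R] {n : ℕ} (A : Matrix (Fin n) (Fin n) R) : Prop :=
  ∃ i j : Fin n, i ≠ j ∧ ∃ x : R, A = 1 + Matrix.single i j x

/-- `EL_n(R)`: the subgroup of `GL_n(R)` generated by the elementary matrices. -/
def ElementarySubgroup (R : Type) [Ring R] (n : ℕ) : Subgroup ((Matrix (Fin n) (Fin n) R)ˣ) :=
  Subgroup.closure {M : (Matrix (Fin n) (Fin n) R)ˣ | IsElementaryMatrix M.val}

section Helpers

variable {R : Type} [Ring R] {n : ℕ}

/-- Any `Rᵐᵒᵖ`-linear functional on `Fin n → R` is given by a left-coefficient row. -/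
lemma opLinear_apply_eq_sum (φ : (Fin n → R) →ₗ[Rᵐᵒᵖ] R) (v : Fin n → R) :
    φ v = ∑ j, φ (Pi.single j 1) * v j := by
  have hv : v = ∑ j, MulOpposite.op (v j) • Pi.single j (1 : R) := by
    funext i
    simp [Finset.sum_apply, Pi.single_apply, MulOpposite.smul_eq_mul_unop]
  conv_lhs => rw [hv, map_sum]
  simp [MulOpposite.smul_eq_mul_unop]

/-- Left-coefficient rows give `Rᵐᵒᵖ`-linear functionals. -/
def rowFunctional (a : Fin n → R) : (Fin n → R) →ₗ[Rᵐᵒᵖ] R where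
  toFun v := ∑ j, a j * v j
  map_add' u w := by simp [mul_add, Finset.sum_add_distrib]
  map_smul' s w := by simp [MulOpposite.smul_eq_mul_unop, Finset.sum_mul, mul_assoc]

lemma isUnimodular_iff (v : Fin n → R) :
    IsUnimodular R v ↔ ∃ a : Fin n → R, ∑ j, a j * v j = 1 := by
  constructor
  · rintro ⟨φ, hφ⟩
    exact ⟨fun j => φ (Pi.single j 1), by rw [← opLinear_apply_eq_sum, hφ]⟩
  · rintro ⟨a, ha⟩
    exact ⟨rowFunctional a, ha⟩

/-- `mulVec` as an `Rᵐᵒᵖ`-linear endomorphism. -/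
def mulVecLinOp (A : Matrix (Fin n) (Fin n) R) : (Fin n → R) →ₗ[Rᵐᵒᵖ] (Fin n → R) where
  toFun v := A.mulVec v
  map_add' u w := Matrix.mulVec_add A u w
  map_smul' s w := by
    funext i
    simp [Matrix.mulVec, dotProduct, MulOpposite.smul_eq_mul_unop, Finset.sum_mul,
      mul_assoc]

@[simp] lemma mulVecLinOp_apply (A : Matrix (Fin n) (Fin n) R) (v : Fin n → R) :
    mulVecLinOp A v = A.mulVec v := rfl

end Helpers

section Elem

variable {R : Type} [Ring R] {n : ℕ}

lemma stdBasis_sq_zero {i j : Fin n} (h : i ≠ j) (c d : R) :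
    Matrix.single i j c * Matrix.single i j d = 0 :=
  Matrix.single_mul_single_of_ne (c := c) i j i h.symm d

/-- The unit given by an elementary matrix. -/
def elemUnit (i j : Fin n) (h : i ≠ j) (c : R) : (Matrix (Fin n) (Fin n) R)ˣ where
  val := 1 + Matrix.single i j c
  inv := 1 - Matrix.single i j c
  val_inv := by
    rw [add_mul, one_mul, mul_sub, mul_one, stdBasis_sq_zero h, sub_zero]; abel
  inv_val := by
    rw [sub_mul, one_mul, mul_add, mul_one, stdBasis_sq_zero h, add_zero]; abel

lemma elemUnit_mem (i j : Fin n) (h : i ≠ j) (c : R) :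
    elemUnit i j h c ∈ ElementarySubgroup R n :=
  Subgroup.subset_closure ⟨i, j, h, c, rfl⟩

end Elem

section Prod

variable {R : Type} [Ring R] {n : ℕ}

lemma col_mem (k : Fin n) (c : Fin n → R) (s : Finset (Fin n)) (hk : k ∉ s) :
    ∃ M ∈ ElementarySubgroup R n,
      M.val = 1 + ∑ j ∈ s, Matrix.single j k (c j) := by
  classical
  induction s using Finset.induction_on with
  | empty => exact ⟨1, one_mem _, by simp⟩
  | @insert a s ha ih =>
    have hka : k ≠ a := fun h => hk (h ▸ Finset.mem_insert_self a s)
    have hks : k ∉ s := fun h => hk (Finset.mem_insert_of_mem h)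
    obtain ⟨M, hM, hMval⟩ := ih hks
    refine ⟨elemUnit a k hka.symm (c a) * M, mul_mem (elemUnit_mem _ _ _ _) hM, ?_⟩
    have hES : Matrix.single a k (c a) * (∑ j ∈ s, Matrix.single j k (c j)) = 0 := by
      rw [Finset.mul_sum]
      refine Finset.sum_eq_zero fun j hj => ?_
      exact Matrix.single_mul_single_of_ne (c := c a) a k j (fun h => hks (h ▸ hj)) (c j)
    rw [Units.val_mul, hMval, Finset.sum_insert ha]
    show (1 + Matrix.single a k (c a)) * _ = _
    rw [add_mul, one_mul, mul_add, mul_one, hES, add_zero]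
    abel

lemma row_mem (k : Fin n) (c : Fin n → R) (s : Finset (Fin n)) (hk : k ∉ s) :
    ∃ M ∈ ElementarySubgroup R n,
      M.val = 1 + ∑ j ∈ s, Matrix.single k j (c j) := by
  classical
  induction s using Finset.induction_on with
  | empty => exact ⟨1, one_mem _, by simp⟩
  | @insert a s ha ih =>
    have hka : k ≠ a := fun h => hk (h ▸ Finset.mem_insert_self a s)
    have hks : k ∉ s := fun h => hk (Finset.mem_insert_of_mem h)
    obtain ⟨M, hM, hMval⟩ := ih hks
    refine ⟨elemUnit k a hka (c a) * M, mul_mem (elemUnit_mem _ _ _ _) hM, ?_⟩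
    have hES : Matrix.single k a (c a) * (∑ j ∈ s, Matrix.single k j (c j)) = 0 := by
      rw [Finset.mul_sum]
      refine Finset.sum_eq_zero fun j hj => ?_
      exact Matrix.single_mul_single_of_ne (c := c a) k a k hka.symm (c j)
    rw [Units.val_mul, hMval, Finset.sum_insert ha]
    show (1 + Matrix.single k a (c a)) * _ = _
    rw [add_mul, one_mul, mul_add, mul_one, hES, add_zero]
    abel

lemma mulVec_col_sum (k : Fin n) (c : Fin n → R) (s : Finset (Fin n)) (v : Fin n → R) :
    (1 + ∑ j ∈ s, Matrix.single j k (c j)).mulVec v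
      = fun i => v i + if i ∈ s then c i * v k else 0 := by
  classical
  rw [Matrix.add_mulVec, Matrix.one_mulVec]
  funext i
  rw [Pi.add_apply]
  congr 1
  simp only [Matrix.mulVec, dotProduct, Matrix.sum_apply, Matrix.single,
    Matrix.of_apply, Finset.sum_mul, ite_mul, zero_mul]
  rw [Finset.sum_comm]
  simp [ite_and, Finset.sum_ite_eq, Finset.sum_ite_eq']

lemma mulVec_row_sum (k : Fin n) (c : Fin n → R) (s : Finset (Fin n)) (v : Fin n → R) :
    (1 + ∑ j ∈ s, Matrix.single k j (c j)).mulVec v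
      = fun i => v i + if i = k then ∑ j ∈ s, c j * v j else 0 := by
  classical
  rw [Matrix.add_mulVec, Matrix.one_mulVec]
  funext i
  rw [Pi.add_apply]
  congr 1
  simp only [Matrix.mulVec, dotProduct, Matrix.sum_apply, Matrix.single,
    Matrix.of_apply, Finset.sum_mul, ite_mul, zero_mul]
  rw [Finset.sum_comm]
  simp only [ite_and, Finset.sum_ite_eq, Finset.sum_ite_eq', Finset.mem_univ, if_true]
  by_cases hik : i = k
  · simp [hik]
  · simp [hik, Ne.symm hik]

end Prod

section Reach

variable {R : Type} [Ring R]

lemma sum_erase_last {m : ℕ} (f : Fin (m + 1) → R) :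
    ∑ j ∈ Finset.univ.erase (Fin.last m), f j = ∑ i : Fin m, f i.castSucc := by
  have h2 : ∑ j ∈ Finset.univ.erase (Fin.last m), f j + f (Fin.last m) = ∑ j, f j :=
    Finset.sum_erase_add _ _ (Finset.mem_univ _)
  rw [Fin.sum_univ_castSucc f] at h2
  exact add_right_cancel h2

lemma reach_single {r m : ℕ} (hSR : SatisfiesSR R r) (hr : r ≤ m + 1)
    (x : Fin (m + 1) → R) (hx : IsUnimodular R x) :
    ∃ M ∈ ElementarySubgroup R (m + 1), M.val.mulVec x = Pi.single (Fin.last m) 1 := by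
  classical
  obtain ⟨b, hb⟩ := hSR m hr x hx
  set k : Fin (m + 1) := Fin.last m with hk
  set s : Finset (Fin (m + 1)) := Finset.univ.erase k with hs
  have hks : k ∉ s := Finset.notMem_erase _ _
  have hmem : ∀ i : Fin m, i.castSucc ∈ s := fun i =>
    Finset.mem_erase.mpr ⟨Fin.ne_last_of_lt (Fin.castSucc_lt_last i), Finset.mem_univ _⟩
  -- stage 1
  set c₁ : Fin (m + 1) → R := fun j => if hj : j = k then 0 else b (j.castPred hj) with hc₁
  obtain ⟨M₁, hM₁, hM₁val⟩ := col_mem k c₁ s hks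
  obtain ⟨z, hzdef⟩ : ∃ z : Fin (m + 1) → R,
      z = fun i => x i + if i ∈ s then c₁ i * x k else 0 := ⟨_, rfl⟩
  have hz : M₁.val.mulVec x = z := by rw [hM₁val, mulVec_col_sum, ← hzdef]
  have hzc : ∀ i : Fin m, z i.castSucc = x i.castSucc + b i * x k := by
    intro i
    have : c₁ i.castSucc = b i := by
      rw [hc₁]
      have hne : i.castSucc ≠ k := Fin.ne_last_of_lt (Fin.castSucc_lt_last i)
      simp [hne]
    rw [hzdef]
    simp only [if_pos (hmem i), this]
  have hzk : z k = x k := by simp [hzdef, hks]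
  -- unimodularity of prefix
  obtain ⟨a, ha⟩ := (isUnimodular_iff _).mp hb
  -- stage 2
  set c₂ : Fin (m + 1) → R := fun j =>
    if hj : j = k then 0 else (1 - z k) * a (j.castPred hj) with hc₂
  obtain ⟨M₂, hM₂, hM₂val⟩ := row_mem k c₂ s hks
  obtain ⟨w, hwdef⟩ : ∃ w : Fin (m + 1) → R,
      w = fun i => z i + if i = k then ∑ j ∈ s, c₂ j * z j else 0 := ⟨_, rfl⟩
  have hw : M₂.val.mulVec z = w := by rw [hM₂val, mulVec_row_sum, ← hwdef]
  have hwk : w k = 1 := by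
    have hsum : ∑ j ∈ s, c₂ j * z j = 1 - z k := by
      rw [hs, hk, sum_erase_last (fun j => c₂ j * z j)]
      have : ∀ i : Fin m, c₂ i.castSucc * z i.castSucc
          = (1 - z k) * (a i * (x i.castSucc + b i * x k)) := by
        intro i
        have hne : i.castSucc ≠ k := Fin.ne_last_of_lt (Fin.castSucc_lt_last i)
        rw [hc₂]
        simp only [dif_neg hne, Fin.castPred_castSucc, hzc i, mul_assoc]
      rw [Finset.sum_congr rfl fun i _ => this i, ← Finset.mul_sum, ha, mul_one]
    rw [hwdef]
    simp only [if_pos rfl, hsum, if_true]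
    rw [add_comm, sub_add_cancel]
  have hwc : ∀ i, i ∈ s → w i = z i := by
    intro i hi
    have : i ≠ k := (Finset.mem_erase.mp hi).1
    rw [hwdef]
    simp [this]
  -- stage 3
  set c₃ : Fin (m + 1) → R := fun j => -z j with hc₃
  obtain ⟨M₃, hM₃, hM₃val⟩ := col_mem k c₃ s hks
  have hu : M₃.val.mulVec w = Pi.single k 1 := by
    rw [hM₃val, mulVec_col_sum]
    funext i
    by_cases hi : i = k
    · subst hi
      simp [hks, hwk]
    · have his : i ∈ s := Finset.mem_erase.mpr ⟨hi, Finset.mem_univ _⟩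
      rw [if_pos his, hwk, hwc i his]
      simp [hc₃, hi, Pi.single_apply]
  refine ⟨M₃ * M₂ * M₁, mul_mem (mul_mem hM₃ hM₂) hM₁, ?_⟩
  rw [Units.val_mul, Units.val_mul, ← Matrix.mulVec_mulVec, ← Matrix.mulVec_mulVec, hz, hw, hu]

end Reach

section Compl

variable {R : Type} [Ring R] {n : ℕ}

lemma compl_exists_proj {y : Fin n → R} (hy : IsUnimodular R y)
    (D : Submodule Rᵐᵒᵖ (Fin n → R)) (hD : IsCompl D (Submodule.span Rᵐᵒᵖ {y})) :
    ∃ φ : (Fin n → R) →ₗ[Rᵐᵒᵖ] R, φ y = 1 ∧ ∀ v, v ∈ D ↔ φ v = 0 := by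
  obtain ⟨φ₀, hφ₀⟩ := hy
  set q := Submodule.span Rᵐᵒᵖ {y} with hq
  have hy_mem : y ∈ q := Submodule.mem_span_singleton_self y
  set π := Submodule.projectionOnto q D hD.symm with hπ
  refine ⟨φ₀.comp (q.subtype.comp π), ?_, ?_⟩
  · have : π y = ⟨y, hy_mem⟩ := Submodule.projectionOnto_apply_left hD.symm ⟨y, hy_mem⟩
    simp [this, hφ₀]
  · intro v
    constructor
    · intro hv
      have : π v = 0 := Submodule.projectionOnto_apply_of_mem_right hD.symm hv
      simp [this]
    · intro hv
      have hπv : (π v : Fin n → R) ∈ q := (π v).2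
      obtain ⟨c, hc⟩ := Submodule.mem_span_singleton.mp hπv
      have h1 : φ₀ ((π v : Fin n → R)) = c.unop := by
        rw [← hc, _root_.map_smul, hφ₀, MulOpposite.smul_eq_mul_unop, one_mul]
      have h2 : c.unop = 0 := by
        simpa [h1] using hv
      have hc0 : c = 0 := MulOpposite.unop_injective h2
      have h3 : π v = 0 := by
        apply Subtype.ext
        rw [← hc, hc0, zero_smul]
        rfl
      exact (Submodule.projectionOnto_apply_eq_zero_iff hD.symm).mp h3

end Compl

section Equiv

variable {R : Type} [Ring R] {n : ℕ}

/-- The `Rᵐᵒᵖ`-linear automorphism given by an invertible matrix. -/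
def unitEquiv (A : (Matrix (Fin n) (Fin n) R)ˣ) : (Fin n → R) ≃ₗ[Rᵐᵒᵖ] (Fin n → R) :=
  LinearEquiv.ofLinear (mulVecLinOp A.val) (mulVecLinOp A⁻¹.val)
    (LinearMap.ext fun v => by
      simp only [LinearMap.comp_apply, mulVecLinOp_apply, Matrix.mulVec_mulVec,
        Units.mul_inv, Matrix.one_mulVec, LinearMap.id_apply])
    (LinearMap.ext fun v => by
      simp only [LinearMap.comp_apply, mulVecLinOp_apply, Matrix.mulVec_mulVec,
        Units.inv_mul, Matrix.one_mulVec, LinearMap.id_apply])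

@[simp] lemma unitEquiv_apply (A : (Matrix (Fin n) (Fin n) R)ˣ) (v : Fin n → R) :
    unitEquiv A v = A.val.mulVec v := rfl

end Equiv

set_option maxHeartbeats 1000000 in
/-- If `R` satisfies `(SR_r)` and `n ≥ r`, and `x, y ∈ Rⁿ` are unimodular with complements
`C, D` (i.e. `Rⁿ = C ⊕ x·R` and `Rⁿ = D ⊕ y·R` as right `R`-modules), then some
`M ∈ EL_n(R)` satisfies `M·x = y` and `M·C = D`. -/
theorem elementarySubgroup_transitive_on_split_unimodular (R : Type) [Ring R] (r n : ℕ)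
    (hSR : SatisfiesSR R r) (hn : r ≤ n) (x y : Fin n → R)
    (hx : IsUnimodular R x) (hy : IsUnimodular R y)
    (C D : Submodule Rᵐᵒᵖ (Fin n → R))
    (hC : IsCompl C (Submodule.span Rᵐᵒᵖ {x}))
    (hD : IsCompl D (Submodule.span Rᵐᵒᵖ {y})) :
    ∃ M ∈ ElementarySubgroup R n, M.val.mulVec x = y ∧
      (fun u : Fin n → R => M.val.mulVec u) '' (C : Set (Fin n → R)) =
        (D : Set (Fin n → R)) := by
  classical
  cases n with
  | zero =>
    refine ⟨1, one_mem _, Subsingleton.elim _ _, ?_⟩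
    have h1 : (fun u : Fin 0 → R => ((1 : (Matrix (Fin 0) (Fin 0) R)ˣ)).val.mulVec u)
        = fun u => u := by
      funext u; rw [Units.val_one, Matrix.one_mulVec]
    rw [h1, Set.image_id']
    ext v
    have hv : v = 0 := Subsingleton.elim _ _
    simp only [SetLike.mem_coe]
    rw [hv]
    exact ⟨fun _ => D.zero_mem, fun _ => C.zero_mem⟩
  | succ m =>
    obtain ⟨E, hE, hEx⟩ := reach_single hSR hn x hx
    obtain ⟨F, hF, hFy⟩ := reach_single hSR hn y hy
    set k : Fin (m + 1) := Fin.last m with hk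
    set M₀ := F⁻¹ * E with hM₀
    have hM₀mem : M₀ ∈ ElementarySubgroup R (m + 1) := mul_mem (inv_mem hF) hE
    have hM₀x : M₀.val.mulVec x = y := by
      rw [hM₀, Units.val_mul, ← Matrix.mulVec_mulVec, hEx, ← hFy, Matrix.mulVec_mulVec,
        ← Units.val_mul, inv_mul_cancel, Units.val_one, Matrix.one_mulVec]
    set C' := Submodule.map (mulVecLinOp M₀.val) C with hC'def
    have hC'compl : IsCompl C' (Submodule.span Rᵐᵒᵖ {y}) := by
      have h := (Submodule.orderIsoMapComap (unitEquiv M₀)).isCompl hC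
      simp only [Submodule.orderIsoMapComap_apply] at h
      have h1 : Submodule.map (unitEquiv M₀ : (Fin (m + 1) → R) →ₗ[Rᵐᵒᵖ] (Fin (m + 1) → R)) C = C' := by
        ext v
        simp only [Submodule.mem_map, LinearEquiv.coe_coe, unitEquiv_apply, hC'def, mulVecLinOp_apply]
      have h2 : Submodule.map (unitEquiv M₀ : (Fin (m + 1) → R) →ₗ[Rᵐᵒᵖ] (Fin (m + 1) → R)) (Submodule.span Rᵐᵒᵖ {x})
          = Submodule.span Rᵐᵒᵖ {y} := by
        rw [Submodule.map_span]
        congr 1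
        rw [Set.image_singleton, LinearEquiv.coe_coe, unitEquiv_apply, hM₀x]
      rwa [h1, h2] at h
    obtain ⟨φ₁, hφ₁y, hφ₁ker⟩ := compl_exists_proj hy C' hC'compl
    obtain ⟨φ₂, hφ₂y, hφ₂ker⟩ := compl_exists_proj hy D hD
    set a : Fin (m + 1) → R := fun j => φ₂ (Pi.single j 1) - φ₁ (Pi.single j 1) with ha
    have hs : ∀ v, ∑ j, a j * v j = φ₂ v - φ₁ v := by
      intro v
      rw [opLinear_apply_eq_sum φ₂ v, opLinear_apply_eq_sum φ₁ v, ← Finset.sum_sub_distrib]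
      exact Finset.sum_congr rfl fun j _ => (sub_mul _ _ _)
    have hay : ∑ j, a j * y j = 0 := by rw [hs, hφ₂y, hφ₁y, sub_self]
    set a' := Matrix.vecMul a (F⁻¹.val) with ha'
    have hFinv : F⁻¹.val.mulVec (Pi.single k 1) = y := by
      rw [← hFy, Matrix.mulVec_mulVec, ← Units.val_mul, inv_mul_cancel, Units.val_one,
        Matrix.one_mulVec]
    have hmulvv : ∀ (A : Matrix (Fin (m + 1)) (Fin (m + 1)) R) (w b : Fin (m + 1) → R),
        A * Matrix.vecMulVec w b = Matrix.vecMulVec (A.mulVec w) b := by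
      intro A w b; ext i j
      simp [Matrix.mul_apply, Matrix.vecMulVec_apply, Matrix.mulVec, dotProduct,
        Finset.sum_mul, mul_assoc]
    have hvvmul : ∀ (w b : Fin (m + 1) → R) (A : Matrix (Fin (m + 1)) (Fin (m + 1)) R),
        Matrix.vecMulVec w b * A = Matrix.vecMulVec w (Matrix.vecMul b A) := by
      intro w b A; ext i j
      simp [Matrix.mul_apply, Matrix.vecMulVec_apply, Matrix.vecMul, dotProduct,
        Finset.mul_sum, mul_assoc]
    have h1' : F⁻¹.val * Matrix.vecMulVec (Pi.single k 1) a' * F.val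
        = Matrix.vecMulVec y a := by
      rw [hmulvv, hFinv, hvvmul, ha', Matrix.vecMul_vecMul, ← Units.val_mul, inv_mul_cancel,
        Units.val_one, Matrix.vecMul_one]
    have hcol : ∀ l, F⁻¹.val l k = y l := by
      intro l
      have h := congrFun hFinv l
      simp only [Matrix.mulVec_single_one, Matrix.col_apply] at h
      exact h
    have ha'k : a' k = 0 := by
      rw [ha']
      have hvm : Matrix.vecMul a (F⁻¹.val) k = ∑ l, a l * F⁻¹.val l k := rfl
      rw [hvm, Finset.sum_congr rfl fun l _ => by rw [hcol l]]
      exact hay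
    have h4 : (1 : Matrix (Fin (m + 1)) (Fin (m + 1)) R) - Matrix.vecMulVec (Pi.single k 1) a'
        = 1 + ∑ j ∈ Finset.univ.erase k, Matrix.single k j (-(a' j)) := by
      ext i j
      rw [Matrix.sub_apply, Matrix.add_apply, Matrix.sum_apply]
      have hvv : Matrix.vecMulVec (Pi.single k 1) a' i j = if i = k then a' j else 0 := by
        rw [Matrix.vecMulVec_apply, Pi.single_apply]
        split <;> simp
      have hstd : ∀ (l : Fin (m + 1)) (c : R), Matrix.single k l c i j
          = if k = i ∧ l = j then c else 0 := fun l c => rfl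
      have hsum : ∑ l ∈ Finset.univ.erase k, Matrix.single k l (-(a' l)) i j
          = if i = k ∧ j ≠ k then -(a' j) else 0 := by
        by_cases hik : i = k
        · have : ∀ l ∈ Finset.univ.erase k, Matrix.single k l (-(a' l)) i j
              = if l = j then -(a' l) else 0 := by
            intro l _
            rw [hstd]
            simp [hik.symm]
          rw [Finset.sum_congr rfl this, Finset.sum_ite_eq']
          by_cases hjk : j = k
          · simp [hjk, hik]
          · simp [hjk, hik, Finset.mem_erase]
        · have : ∀ l ∈ Finset.univ.erase k, Matrix.single k l (-(a' l)) i j = 0 := by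
            intro l _
            rw [hstd, if_neg]
            rintro ⟨hki, -⟩
            exact hik hki.symm
          rw [Finset.sum_congr rfl this, Finset.sum_const_zero, if_neg]
          rintro ⟨hik', -⟩
          exact hik hik'
      rw [hvv, hsum]
      by_cases hik : i = k
      · by_cases hjk : j = k
        · simp [hik, hjk, ha'k]
        · simp [hik, hjk, sub_eq_add_neg]
      · simp [hik]
    obtain ⟨W, hW, hWval⟩ := row_mem k (fun j => -(a' j)) (Finset.univ.erase k)
      (Finset.notMem_erase _ _)
    set T := (1 : Matrix (Fin (m + 1)) (Fin (m + 1)) R) - Matrix.vecMulVec y a with hT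
    have hTval : ((F⁻¹ : _) * W * F).val = T := by
      rw [Units.val_mul, Units.val_mul, hWval, ← h4, mul_sub, mul_one, sub_mul,
        ← Units.val_mul, inv_mul_cancel, Units.val_one, h1', hT]
    have hTv : ∀ v, T.mulVec v = v - MulOpposite.op (∑ j, a j * v j) • y := by
      intro v
      rw [hT, Matrix.sub_mulVec, Matrix.one_mulVec]
      congr 1
      funext i
      simp only [Matrix.mulVec, dotProduct, Matrix.vecMulVec_apply, Pi.smul_apply,
        MulOpposite.smul_eq_mul_unop, MulOpposite.unop_op, mul_assoc, ← Finset.mul_sum]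
    refine ⟨F⁻¹ * W * F * M₀,
      mul_mem (mul_mem (mul_mem (inv_mem hF) hW) hF) hM₀mem, ?_, ?_⟩
    · rw [Units.val_mul, ← Matrix.mulVec_mulVec, hM₀x, hTval, hTv, hay]
      simp
    · have hfun : (fun u : Fin (m + 1) → R => ((F⁻¹ * W * F * M₀).val).mulVec u)
          = (fun u => T.mulVec u) ∘ (fun u => M₀.val.mulVec u) := by
        funext u
        rw [Units.val_mul, hTval, Function.comp_apply, Matrix.mulVec_mulVec]
      rw [hfun, Set.image_comp]
      have himg : (fun u => M₀.val.mulVec u) '' (C : Set (Fin (m + 1) → R))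
          = (C' : Set (Fin (m + 1) → R)) := by
        rw [hC'def, Submodule.map_coe]; rfl
      rw [himg]
      ext v
      constructor
      · rintro ⟨u, huC', rfl⟩
        have hu1 : φ₁ u = 0 := (hφ₁ker u).mp huC'
        have h2 : φ₂ (T.mulVec u) = φ₁ u := by
          rw [hTv, map_sub, _root_.map_smul, hφ₂y, hs u, MulOpposite.smul_eq_mul_unop,
            MulOpposite.unop_op, one_mul, sub_sub_cancel]
        exact (hφ₂ker _).mpr (h2.trans hu1)
      · intro hvD
        have hv2 : φ₂ v = 0 := (hφ₂ker v).mp hvD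
        refine ⟨v + MulOpposite.op (φ₂ v - φ₁ v) • y, ?_, ?_⟩
        · refine (hφ₁ker _).mpr ?_
          rw [map_add, _root_.map_smul, hφ₁y, MulOpposite.smul_eq_mul_unop,
            MulOpposite.unop_op, one_mul, hv2]
          abel
        · show T.mulVec (v + MulOpposite.op (φ₂ v - φ₁ v) • y) = v
          rw [hTv, hs _]
          have hphi : φ₂ (v + MulOpposite.op (φ₂ v - φ₁ v) • y)
              - φ₁ (v + MulOpposite.op (φ₂ v - φ₁ v) • y) = φ₂ v - φ₁ v := by
            rw [map_add, map_add, _root_.map_smul, _root_.map_smul, hφ₁y, hφ₂y]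
            simp only [MulOpposite.smul_eq_mul_unop, MulOpposite.unop_op, one_mul]
            abel
          rw [hphi, add_sub_cancel_right]
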